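/- arXiv:2603.22033 — 2 statements merged into one kernel-verified Lean document; each statement's English description precedes it below -/
import Mathlib

section
/- Let $W$ be a free $\mathbb{Z}$-module with finite basis $B$ containing distinct elements $a, a'$, let $V$ be a free $\mathbb{Z}$-module with finite basis $B_0$ containing a distinguished element $b$, and let $\iota, \iota' : V \to W$ be the linear maps that agree on $B_0 \setminus \{b\}$, sending it bijectively onto $B \setminus \{a, a'\}$, and satisfy $\iota(b) = a$ and $\iota'(b) = a'$. Then $(a - a') \wedge \Lambda^*(\iota)(x) = (a - a') \wedge \Lambda^*(\iota')(x)$ for every $x \in \Lambda^*(V)$; that is, the split map $x \mapsto (a - a') \wedge \Lambda^*(\iota)(x)$ does not depend on which of the two circles produced by the split is used to embed the source module. -/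
/-- Any element of the exterior algebra can be moved past `ι d` (up to changing it). -/
lemma exterior_comm_aux {R M : Type*} [CommRing R] [AddCommGroup M] [Module R M]
    (d : M) (z : ExteriorAlgebra R M) :
    ∃ w : ExteriorAlgebra R M, z * ExteriorAlgebra.ι R d = ExteriorAlgebra.ι R d * w := by
  induction z using ExteriorAlgebra.induction with
  | algebraMap r => exact ⟨algebraMap R _ r, Algebra.commutes r _⟩
  | ι v =>
    refine ⟨-ExteriorAlgebra.ι R v, ?_⟩
    have h := ExteriorAlgebra.ι_add_mul_swap (R := R) v d
    rw [mul_neg]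
    exact eq_neg_of_add_eq_zero_left h
  | mul z1 z2 h1 h2 =>
    obtain ⟨w1, hw1⟩ := h1
    obtain ⟨w2, hw2⟩ := h2
    exact ⟨w1 * w2, by rw [mul_assoc, hw2, ← mul_assoc, hw1, mul_assoc]⟩
  | add z1 z2 h1 h2 =>
    obtain ⟨w1, hw1⟩ := h1
    obtain ⟨w2, hw2⟩ := h2
    exact ⟨w1 + w2, by rw [add_mul, hw1, hw2, mul_add]⟩


/-- Let `W` be a free `ℤ`-module with finite basis `B` containing the distinct elements
`a = B i`, `a' = B i'`, and let `V` be a free `ℤ`-module with finite basis `C` with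
distinguished element `b = C t`.  Let `f, f' : V →ₗ W` agree on `C \ {b}`, sending it
bijectively onto `B \ {a, a'}` (via the index map `e`), with `f b = a` and `f' b = a'`.
Then `(a - a') ∧ Λ*(f)(x) = (a - a') ∧ Λ*(f')(x)` for every `x ∈ Λ*(V)`. -/
theorem stmt5 {σ τ : Type*} [Fintype σ] [Fintype τ]
    {W V : Type*} [AddCommGroup W] [Module ℤ W] [AddCommGroup V] [Module ℤ V]
    (B : Module.Basis σ ℤ W) (C : Module.Basis τ ℤ V) (i i' : σ) (hii : i ≠ i') (t : τ)
    (e : τ → σ)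
    (he : ∀ s, s ≠ t → e s ≠ i ∧ e s ≠ i')
    (hinj : Set.InjOn e {s | s ≠ t})
    (hsurj : ∀ j : σ, j ≠ i → j ≠ i' → ∃ s, s ≠ t ∧ e s = j)
    (f f' : V →ₗ[ℤ] W)
    (hf : ∀ s, s ≠ t → f (C s) = B (e s)) (hf' : ∀ s, s ≠ t → f' (C s) = B (e s))
    (hfb : f (C t) = B i) (hf'b : f' (C t) = B i') :
    ∀ x : ExteriorAlgebra ℤ V,
      ExteriorAlgebra.ι ℤ (B i - B i') * ExteriorAlgebra.map f x =
        ExteriorAlgebra.ι ℤ (B i - B i') * ExteriorAlgebra.map f' x := by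
  -- Step 1: `f v - f' v` is always a multiple of `d := B i - B i'`.
  have hdiff : ∀ v : V, f v - f' v = C.repr v t • (B i - B i') := by
    haveI := @IsScalarTower.left ℤ W _ (Module.toDistribMulAction (R := ℤ) (M := W)).toMulAction
    have : f - f' = (C.coord t).smulRight (B i - B i') := by
      apply C.ext
      intro s
      by_cases hs : s = t
      · subst hs
        simp [hfb, hf'b, Module.Basis.coord_apply]
        exact (@one_smul ℤ W _ (Module.toDistribMulAction (R := ℤ) (M := W)).toMulAction (B i - B i')).symm
      · rw [LinearMap.sub_apply, hf s hs, hf' s hs, sub_self, LinearMap.smulRight_apply,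
          Module.Basis.coord_apply, Module.Basis.repr_self, Finsupp.single_eq_of_ne' hs]
        exact (@zero_smul ℤ W _ _ (MulActionWithZero.toSMulWithZero ℤ W) (B i - B i')).symm
    intro v
    have h2 := congrFun (congrArg (fun g : V →ₗ[ℤ] W => (g : V → W)) this) v
    simpa [Module.Basis.coord_apply, ← Int.cast_smul_eq_zsmul ℤ] using h2
  set d : W := B i - B i' with hd
  -- Step 2: `map f x - map f' x` is a left multiple of `ι d`.
  have key : ∀ x : ExteriorAlgebra ℤ V, ∃ y,
      ExteriorAlgebra.map f x - ExteriorAlgebra.map f' x = ExteriorAlgebra.ι ℤ d * y := by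
    intro x
    induction x using ExteriorAlgebra.induction with
    | algebraMap r => exact ⟨0, by simp⟩
    | ι v =>
      refine ⟨algebraMap ℤ _ (C.repr v t), ?_⟩
      rw [ExteriorAlgebra.map_apply_ι, ExteriorAlgebra.map_apply_ι, ← map_sub, hdiff v,
        ← Algebra.commutes, ← Algebra.smul_def]
      simp [← Int.cast_smul_eq_zsmul ℤ]
    | mul x1 x2 h1 h2 =>
      obtain ⟨y1, hy1⟩ := h1
      obtain ⟨y2, hy2⟩ := h2
      obtain ⟨w, hw⟩ := exterior_comm_aux d (ExteriorAlgebra.map f' x1)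
      refine ⟨y1 * ExteriorAlgebra.map f x2 + w * y2, ?_⟩
      have : ExteriorAlgebra.map f (x1 * x2) - ExteriorAlgebra.map f' (x1 * x2) =
          (ExteriorAlgebra.map f x1 - ExteriorAlgebra.map f' x1) * ExteriorAlgebra.map f x2
          + ExteriorAlgebra.map f' x1 *
            (ExteriorAlgebra.map f x2 - ExteriorAlgebra.map f' x2) := by
        rw [map_mul, map_mul]; noncomm_ring
      rw [this, hy1, hy2, ← mul_assoc, hw, mul_add, mul_assoc, mul_assoc]
    | add x1 x2 h1 h2 =>
      obtain ⟨y1, hy1⟩ := h1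
      obtain ⟨y2, hy2⟩ := h2
      exact ⟨y1 + y2, by rw [map_add, map_add, mul_add, ← hy1, ← hy2]; noncomm_ring⟩
  intro x
  obtain ⟨y, hy⟩ := key x
  have : ExteriorAlgebra.ι ℤ d * (ExteriorAlgebra.map f x - ExteriorAlgebra.map f' x) = 0 := by
    rw [hy, ← mul_assoc, ExteriorAlgebra.ι_sq_zero, zero_mul]
  rw [mul_sub] at this
  exact sub_eq_zero.mp this
end

section
/- Let $W$ be a free $\mathbb{Z}$-module with finite basis $B$ containing distinct elements $a, a'$, let $V$ be a free $\mathbb{Z}$-module with finite basis $B_0$, and let $\iota : V \to W$ be a linear map sending $B_0$ bijectively onto $B \setminus \{a'\}$. Then the split map $\Lambda^*(V) \to \Lambda^*(W)$, $x \mapsto (a - a') \wedge \Lambda^*(\iota)(x)$, carries the reduced subalgebra $\Lambda_\circ^*(V)$ into the reduced subalgebra $\Lambda_\circ^*(W)$. -/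
/-- Let `W` be a free `ℤ`-module with finite basis `B` containing the distinct elements
`a = B i`, `a' = B i'`, let `V` be a free `ℤ`-module with finite basis `C`, and let
`f : V →ₗ W` send the basis `C` bijectively onto `B \ {a'}` (via the index map `e`).
Then the split map `x ↦ (a - a') ∧ Λ*(f)(x)` carries the reduced subalgebra
`Λ°*(V)` (the subalgebra generated by the kernel of the augmentation sending each basis
element to `1`) into the reduced subalgebra `Λ°*(W)`. -/
theorem stmt6 {σ τ : Type*} [Fintype σ] [Fintype τ]
    {W V : Type*} [AddCommGroup W] [Module ℤ W] [AddCommGroup V] [Module ℤ V]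
    (B : Module.Basis σ ℤ W) (C : Module.Basis τ ℤ V) (i i' : σ) (hii : i ≠ i')
    (e : τ → σ) (hinj : Function.Injective e) (hrange : Set.range e = {j | j ≠ i'})
    (f : V →ₗ[ℤ] W) (hf : ∀ s, f (C s) = B (e s)) :
    ∀ x ∈ Algebra.adjoin ℤ
        (ExteriorAlgebra.ι ℤ '' (LinearMap.ker (C.constr ℤ fun _ => (1 : ℤ)) : Set V)),
      ExteriorAlgebra.ι ℤ (B i - B i') * ExteriorAlgebra.map f x ∈
        Algebra.adjoin ℤ
          (ExteriorAlgebra.ι ℤ '' (LinearMap.ker (B.constr ℤ fun _ => (1 : ℤ)) : Set W)) := by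
  intro x hx
  have hcomp : (B.constr ℤ fun _ => (1 : ℤ)) ∘ₗ f = C.constr ℤ fun _ => (1 : ℤ) := by
    apply C.ext
    intro s
    simp [hf, Module.Basis.constr_basis]
  have h1 : ExteriorAlgebra.ι ℤ (B i - B i') ∈ Algebra.adjoin ℤ
      (ExteriorAlgebra.ι ℤ '' (LinearMap.ker (B.constr ℤ fun _ => (1 : ℤ)) : Set W)) := by
    refine Algebra.subset_adjoin ⟨B i - B i', ?_, rfl⟩
    simp [LinearMap.mem_ker, map_sub, Module.Basis.constr_basis]
  have h2 : ExteriorAlgebra.map f x ∈ Algebra.adjoin ℤ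
      (ExteriorAlgebra.ι ℤ '' (LinearMap.ker (B.constr ℤ fun _ => (1 : ℤ)) : Set W)) := by
    induction hx using Algebra.adjoin_induction with
    | mem v hv =>
      obtain ⟨w, hw, rfl⟩ := hv
      refine Algebra.subset_adjoin ⟨f w, ?_, ?_⟩
      · refine LinearMap.mem_ker.mpr ?_
        rw [← LinearMap.comp_apply, hcomp]
        exact hw
      · simp [ExteriorAlgebra.map_apply_ι]
    | algebraMap r =>
      simpa using Subalgebra.algebraMap_mem _ r
    | add a b _ _ ha hb =>
      simpa [map_add] using add_mem ha hb
    | mul a b _ _ ha hb =>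
      simpa [map_mul] using mul_mem ha hb
  exact mul_mem h1 h2
end
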